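/- If the empirical logistic risk L = (1/n) Σ_{i=1}^n log(1 + e^{−q_i}) satisfies L ≤ 1/(2n), where q_min = min_i q_i, then q_min ≤ −log L ≤ log(2n) + q_min. -/

import Mathlib

open Real Finset

theorem stmt_5 (n : ℕ) (hn : 1 ≤ n) (q : Fin n → ℝ) (qmin L : ℝ)
    (hqmin : qmin = ⨅ i, q i)
    (hL : L = (1 / n) * ∑ i, Real.log (1 + Real.exp (-q i)))
    (hsmall : L ≤ 1 / (2 * n)) :
    qmin ≤ -Real.log L ∧ -Real.log L ≤ Real.log (2 * n) + qmin := by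
  have hN : (0:ℝ) < n := by exact_mod_cast Nat.pos_of_ne_zero (by omega)
  have hne : Nonempty (Fin n) := ⟨⟨0, by omega⟩⟩
  obtain ⟨i0, hi0⟩ := Finite.exists_min q
  have hmin : qmin = q i0 := by
    rw [hqmin]
    exact le_antisymm (ciInf_le (Finite.bddBelow_range q) i0) (le_ciInf hi0)
  set x := Real.exp (-q i0) with hx
  have hx0 : 0 < x := Real.exp_pos _
  have hterm_pos : ∀ i, 0 < Real.log (1 + Real.exp (-q i)) := fun i =>
    Real.log_pos (by linarith [Real.exp_pos (-q i)])
  have hsum_pos : 0 < ∑ i, Real.log (1 + Real.exp (-q i)) :=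
    Finset.sum_pos (fun i _ => hterm_pos i) Finset.univ_nonempty
  have hL0 : 0 < L := by
    rw [hL]; exact mul_pos (by positivity) hsum_pos
  have hnL : (n:ℝ) * L = ∑ i, Real.log (1 + Real.exp (-q i)) := by
    rw [hL]; field_simp
  -- upper bound on L
  have hterm_le : ∀ i ∈ Finset.univ, Real.log (1 + Real.exp (-q i)) ≤ x := by
    intro i _
    have h1 : Real.log (1 + Real.exp (-q i)) ≤ Real.exp (-q i) := by
      have := Real.log_le_sub_one_of_pos (show (0:ℝ) < 1 + Real.exp (-q i) by positivity)
      linarith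
    have h2 : Real.exp (-q i) ≤ x := Real.exp_le_exp.mpr (by linarith [hi0 i])
    linarith
  have hsum_le : ∑ i, Real.log (1 + Real.exp (-q i)) ≤ (n:ℝ) * x := by
    calc ∑ i, Real.log (1 + Real.exp (-q i)) ≤ ∑ _i : Fin n, x :=
          Finset.sum_le_sum hterm_le
      _ = (n:ℝ) * x := by simp [mul_comm]
  have hLx : L ≤ x := by
    have : (n:ℝ) * L ≤ (n:ℝ) * x := by rw [hnL]; exact hsum_le
    exact le_of_mul_le_mul_left this hN
  have hlogLx : Real.log L ≤ -q i0 := by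
    calc Real.log L ≤ Real.log x := Real.log_le_log hL0 hLx
      _ = -q i0 := Real.log_exp _
  -- lower bound on L
  have hnL_half : (n:ℝ) * L ≤ 1/2 := by
    have h1 : (n:ℝ) * L ≤ (n:ℝ) * (1/(2*(n:ℝ))) :=
      mul_le_mul_of_nonneg_left (by exact_mod_cast hsmall) hN.le
    have h2 : (n:ℝ) * (1/(2*(n:ℝ))) = 1/2 := by field_simp
    linarith
  have hsum_ge : Real.log (1 + x) ≤ (n:ℝ) * L := by
    rw [hnL]
    exact Finset.single_le_sum (fun i _ => (hterm_pos i).le) (Finset.mem_univ i0)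
  have hlog2 : Real.log (1+x) < Real.log 2 := by
    have := Real.log_two_gt_d9
    linarith
  have h1x2 : 1 + x < 2 := by
    have := (Real.log_lt_log_iff (by linarith) (by norm_num)).mp hlog2
    exact this
  have hlow : x / (1+x) ≤ Real.log (1+x) := by
    have h := Real.log_le_sub_one_of_pos (show (0:ℝ) < (1+x)⁻¹ by positivity)
    rw [Real.log_inv] at h
    have heq : 1 - (1+x)⁻¹ = x/(1+x) := by field_simp; ring
    linarith [heq ▸ (by linarith : 1 - (1+x)⁻¹ ≤ Real.log (1+x))]
  have hx2 : x/2 ≤ x/(1+x) := by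
    rw [div_le_div_iff₀ (by norm_num) (by linarith)]
    nlinarith
  have hLlow : x/(2*(n:ℝ)) ≤ L := by
    rw [div_le_iff₀ (by positivity)]
    nlinarith
  have hloglow : Real.log (x/(2*(n:ℝ))) ≤ Real.log L :=
    Real.log_le_log (by positivity) hLlow
  have hsplit : Real.log (x/(2*(n:ℝ))) = -q i0 - Real.log (2*(n:ℝ)) := by
    rw [Real.log_div hx0.ne' (by positivity), Real.log_exp]
  constructor
  · rw [hmin]; linarith
  · rw [hmin]
    push_cast
    push_cast at hsplit hloglow
    linarith
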